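/- Let λ₀ ∈ ℂ with |λ₀| = 1, and define Φ on the 2×2 complex matrices by Φ([[a, b], [c, d]]) = [[(a+d)/2, λ₀ b], [conj(λ₀) c, (a+d)/2]]. Then Φ is a linear map satisfying Φ(I) = I and tr(Φ(X)) = tr(X) for all X, and Φ is positive: whenever X is a positive semidefinite 2×2 complex matrix, Φ(X) is positive semidefinite. -/

import Mathlib

open Matrix
open scoped ComplexOrder

theorem stmt_14 (l₀ : ℂ) (hl₀ : ‖l₀‖ = 1)
    (Φ : Matrix (Fin 2) (Fin 2) ℂ → Matrix (Fin 2) (Fin 2) ℂ)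
    (hΦ : ∀ X, Φ X = !![(X 0 0 + X 1 1) / 2, l₀ * X 0 1;
                        (starRingEnd ℂ) l₀ * X 1 0, (X 0 0 + X 1 1) / 2]) :
    (∀ X Y, Φ (X + Y) = Φ X + Φ Y) ∧
    (∀ (c : ℂ) X, Φ (c • X) = c • Φ X) ∧
    Φ 1 = 1 ∧
    (∀ X, (Φ X).trace = X.trace) ∧
    (∀ X, X.PosSemidef → (Φ X).PosSemidef) := by
  have hll : (starRingEnd ℂ) l₀ * l₀ = 1 := by
    rw [mul_comm, Complex.mul_conj]
    norm_cast
    simp [Complex.normSq_eq_norm_sq, hl₀]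
  refine ⟨?_, ?_, ?_, ?_, ?_⟩
  · intro X Y
    rw [hΦ, hΦ, hΦ]
    ext i j
    fin_cases i <;> fin_cases j <;>
      simp [Matrix.add_apply] <;> ring
  · intro c X
    rw [hΦ, hΦ]
    ext i j
    fin_cases i <;> fin_cases j <;>
      simp [Matrix.smul_apply, smul_eq_mul] <;> ring
  · rw [hΦ]
    ext i j
    fin_cases i <;> fin_cases j <;>
      simp [Matrix.one_apply] <;> norm_num
  · intro X
    rw [hΦ]
    simp [Matrix.trace_fin_two]
    try ring
  · intro X hX
    have ha : (starRingEnd ℂ) (X 0 0) = X 0 0 := hX.1.apply 0 0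
    have hd : (starRingEnd ℂ) (X 1 1) = X 1 1 := hX.1.apply 1 1
    have hb : (starRingEnd ℂ) (X 0 1) = X 1 0 := hX.1.apply 1 0
    have hc : (starRingEnd ℂ) (X 1 0) = X 0 1 := hX.1.apply 0 1
    refine Matrix.PosSemidef.of_dotProduct_mulVec_nonneg ?_ ?_
    · show (Φ X)ᴴ = Φ X
      rw [hΦ]
      rw [Matrix.eta_fin_two (!![(X 0 0 + X 1 1) / 2, l₀ * X 0 1;
          (starRingEnd ℂ) l₀ * X 1 0, (X 0 0 + X 1 1) / 2])ᴴ]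
      simp only [Matrix.conjTranspose_apply, Matrix.cons_val', Matrix.cons_val_zero,
        Matrix.cons_val_one, Matrix.head_cons, Matrix.empty_val', Matrix.cons_val_fin_one,
        Matrix.head_fin_const, Matrix.of_apply, Complex.star_def, _root_.map_mul, map_div₀,
        map_add, map_ofNat, Complex.conj_conj, ha, hb, hc, hd]
    · intro v
      have h1 := hX.dotProduct_mulVec_nonneg ![v 0, l₀ * v 1]
      have h2 := hX.dotProduct_mulVec_nonneg ![(starRingEnd ℂ) (v 1), l₀ * (starRingEnd ℂ) (v 0)]
      have key : star v ⬝ᵥ (Φ X) *ᵥ v =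
          (star ![v 0, l₀ * v 1] ⬝ᵥ X *ᵥ ![v 0, l₀ * v 1] +
           star ![(starRingEnd ℂ) (v 1), l₀ * (starRingEnd ℂ) (v 0)] ⬝ᵥ
             X *ᵥ ![(starRingEnd ℂ) (v 1), l₀ * (starRingEnd ℂ) (v 0)]) / 2 := by
        rw [hΦ]
        simp only [dotProduct, Matrix.mulVec, Fin.sum_univ_two, Pi.star_apply,
          Matrix.cons_val', Matrix.cons_val_zero, Matrix.cons_val_one, Matrix.head_cons,
          Matrix.empty_val', Matrix.cons_val_fin_one, Matrix.head_fin_const,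
          Complex.star_def, _root_.map_mul, RingHomCompTriple.comp_apply, Complex.conj_conj,
          Matrix.of_apply, RingHom.id_apply]
        linear_combination (- X 1 1 * ((starRingEnd ℂ) (v 0) * v 0 +
          (starRingEnd ℂ) (v 1) * v 1) / 2) * hll
      rw [key]
      have hs := add_nonneg h1 h2
      set s := star ![v 0, l₀ * v 1] ⬝ᵥ X *ᵥ ![v 0, l₀ * v 1] +
           star ![(starRingEnd ℂ) (v 1), l₀ * (starRingEnd ℂ) (v 0)] ⬝ᵥ
             X *ᵥ ![(starRingEnd ℂ) (v 1), l₀ * (starRingEnd ℂ) (v 0)] with hsdef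
      rw [Complex.le_def] at hs ⊢
      simp only [Complex.zero_re, Complex.zero_im] at hs ⊢
      constructor
      · simp [Complex.div_re]; nlinarith [hs.1]
      · simp [Complex.div_im]; simp [← hs.2]
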